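/- For every integer k ≥ 1 and all real numbers a ≤ b, ∫_a^b |err(x)|^k dx ≤ ((b − a)/(k+1)) · δ^k + (4/(k+1)) · δ^{k+1}. -/

import Mathlib

open MeasureTheory

/-- Greatest element of `F` below `x`. -/
noncomputable def flF (F : Set ℝ) (x : ℝ) : ℝ := sSup (F ∩ Set.Iic x)

/-- Least element of `F` above `x`. -/
noncomputable def ceF (F : Set ℝ) (x : ℝ) : ℝ := sInf (F ∩ Set.Ici x)

theorem error_int_nearest_add
    (F : Set ℝ) (hF_closed : IsClosed F) (hF_ne : F.Nonempty)
    (hF_below : ∀ x : ℝ, ∃ z ∈ F, z ≤ x) (hF_above : ∀ x : ℝ, ∃ z ∈ F, x ≤ z)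
    (rd : ℝ → ℝ) (hrd_meas : Measurable rd)
    (hrd_mem : ∀ x : ℝ, rd x = flF F x ∨ rd x = ceF F x)
    (hrd_near : ∀ x : ℝ, |rd x - x| = min (x - flF F x) (ceF F x - x))
    (δ : ℝ) (hδ : 0 < δ) (hgap : ∀ x : ℝ, ceF F x - flF F x ≤ 2 * δ)
    (k : ℕ) (hk : 1 ≤ k) (a b : ℝ) (hab : a ≤ b) :
    (∫ x in a..b, |rd x - x| ^ k)
      ≤ ((b - a) / (k + 1)) * δ ^ k + (4 / (k + 1)) * δ ^ (k + 1) := by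
  classical
  -- basic facts about flF/ceF
  have hflP : ∀ x : ℝ, flF F x ∈ F ∧ flF F x ≤ x := by
    intro x
    obtain ⟨z, hzF, hzx⟩ := hF_below x
    have hne : (F ∩ Set.Iic x).Nonempty := ⟨z, hzF, hzx⟩
    have hbdd : BddAbove (F ∩ Set.Iic x) := ⟨x, fun y hy => hy.2⟩
    have hm := (hF_closed.inter isClosed_Iic).csSup_mem hne hbdd
    exact ⟨hm.1, hm.2⟩
  have hceP : ∀ x : ℝ, ceF F x ∈ F ∧ x ≤ ceF F x := by
    intro x
    obtain ⟨z, hzF, hzx⟩ := hF_above x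
    have hne : (F ∩ Set.Ici x).Nonempty := ⟨z, hzF, hzx⟩
    have hbdd : BddBelow (F ∩ Set.Ici x) := ⟨x, fun y hy => hy.2⟩
    have hm := (hF_closed.inter isClosed_Ici).csInf_mem hne hbdd
    exact ⟨hm.1, hm.2⟩
  have hfl_ge : ∀ x y : ℝ, y ∈ F → y ≤ x → y ≤ flF F x := fun x y hyF hyx =>
    le_csSup ⟨x, fun w hw => hw.2⟩ ⟨hyF, hyx⟩
  have hce_le : ∀ x y : ℝ, y ∈ F → x ≤ y → ceF F x ≤ y := fun x y hyF hyx =>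
    csInf_le ⟨x, fun w hw => hw.2⟩ ⟨hyF, hyx⟩
  have hgap_empty : ∀ x : ℝ, x ∉ F → Set.Ioo (flF F x) (ceF F x) ∩ F = ∅ := by
    intro x hx
    ext y
    simp only [Set.mem_inter_iff, Set.mem_Ioo, Set.mem_empty_iff_false, iff_false, not_and]
    rintro ⟨h1, h2⟩ hyF
    rcases le_or_gt y x with h | h
    · exact absurd (hfl_ge x y hyF h) (not_le.2 h1)
    · exact absurd (hce_le x y hyF h.le) (not_le.2 h2)
  have hfl_of_gap : ∀ z z' x : ℝ, z ∈ F → z' ∈ F → Set.Ioo z z' ∩ F = ∅ →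
      x ∈ Set.Ioo z z' → flF F x = z ∧ ceF F x = z' := by
    intro z z' x hz hz' hemp hx
    constructor
    · refine le_antisymm ?_ (hfl_ge x z hz hx.1.le)
      by_contra h
      push_neg at h
      have h1 : flF F x ∈ Set.Ioo z z' ∩ F :=
        ⟨⟨h, lt_of_le_of_lt (hflP x).2 hx.2⟩, (hflP x).1⟩
      rw [hemp] at h1; exact h1
    · refine le_antisymm (hce_le x z' hz' hx.2.le) ?_
      by_contra h
      push_neg at h
      have h1 : ceF F x ∈ Set.Ioo z z' ∩ F :=
        ⟨⟨lt_of_lt_of_le hx.1 (hceP x).2, h⟩, (hceP x).1⟩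
      rw [hemp] at h1; exact h1
  have hlt : ∀ x : ℝ, x ∉ F → flF F x < x ∧ x < ceF F x := by
    intro x hx
    constructor
    · exact lt_of_le_of_ne (hflP x).2 (by intro h; exact hx (by rw [← h]; exact (hflP x).1))
    · exact lt_of_le_of_ne (hceP x).2 (by intro h; exact hx (by rw [h]; exact (hceP x).1))
  -- the error function
  set f : ℝ → ℝ := fun x => |rd x - x| ^ k with hf
  have hfmeas : Measurable f := ((hrd_meas.sub measurable_id).abs).pow_const k
  have hfnonneg : ∀ x, 0 ≤ f x := fun x => pow_nonneg (abs_nonneg _) k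
  have herr_le : ∀ x, |rd x - x| ≤ δ := by
    intro x
    have h2 := hgap x
    have h3 : min (x - flF F x) (ceF F x - x) ≤ x - flF F x := min_le_left _ _
    have h4 : min (x - flF F x) (ceF F x - x) ≤ ceF F x - x := min_le_right _ _
    rw [hrd_near x]; linarith
  have hfbound : ∀ x, f x ≤ δ ^ k := fun x =>
    pow_le_pow_left₀ (abs_nonneg _) (herr_le x) k
  have hfF : ∀ x ∈ F, f x = 0 := by
    intro x hx
    have h1 : flF F x = x := le_antisymm (hflP x).2 (hfl_ge x x hx le_rfl)
    have h2 : ceF F x = x := le_antisymm (hce_le x x hx le_rfl) (hceP x).2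
    have h3 : |rd x - x| = 0 := by rw [hrd_near x, h1, h2]; simp
    simp only [hf]; rw [h3]; exact zero_pow (by omega)
  -- integrability on finite-measure sets
  have hIntOn : ∀ s : Set ℝ, volume s < ⊤ → IntegrableOn f s volume := by
    intro s hs
    have hconst : IntegrableOn (fun _ : ℝ => δ ^ k) s volume :=
      integrableOn_const hs.ne enorm_ne_top
    refine hconst.mono' hfmeas.aestronglyMeasurable ?_
    filter_upwards with x
    rw [Real.norm_eq_abs, abs_of_nonneg (hfnonneg x)]
    exact hfbound x
  -- the countable family of gaps
  set G : Set (ℝ × ℝ) := (fun q : ℚ => ((flF F q, ceF F q) : ℝ × ℝ)) '' {q : ℚ | (q : ℝ) ∉ F}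
    with hG
  have hGc : G.Countable := (Set.to_countable _).image _
  haveI : Countable ↥G := hGc.to_subtype
  have hGprop : ∀ p ∈ G, p.1 ∈ F ∧ p.2 ∈ F ∧ p.1 < p.2 ∧ Set.Ioo p.1 p.2 ∩ F = ∅ := by
    rintro p ⟨q, hq, rfl⟩
    exact ⟨(hflP q).1, (hceP q).1, lt_trans (hlt q hq).1 (hlt q hq).2, hgap_empty q hq⟩
  have hcover : ∀ x : ℝ, x ∉ F → ∃ p ∈ G, x ∈ Set.Ioo p.1 p.2 := by
    intro x hx
    obtain ⟨q, hq1, hq2⟩ := exists_rat_btwn (lt_trans (hlt x hx).1 (hlt x hx).2)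
    have hqmem : (q : ℝ) ∈ Set.Ioo (flF F x) (ceF F x) := ⟨hq1, hq2⟩
    have hqF : (q : ℝ) ∉ F := by
      intro h
      have h5 : (q : ℝ) ∈ Set.Ioo (flF F x) (ceF F x) ∩ F := ⟨hqmem, h⟩
      rw [hgap_empty x hx] at h5; exact h5
    have heq := hfl_of_gap (flF F x) (ceF F x) q (hflP x).1 (hceP x).1 (hgap_empty x hx) hqmem
    refine ⟨(flF F q, ceF F q), ⟨q, hqF, rfl⟩, ?_⟩
    rw [heq.1, heq.2]
    exact ⟨(hlt x hx).1, (hlt x hx).2⟩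
  -- pairwise disjointness of gaps
  have hIooDisj : Pairwise (Function.onFun Disjoint fun p : ↥G => Set.Ioo (p : ℝ × ℝ).1 (p : ℝ × ℝ).2) := by
    intro p p' hne
    rw [Function.onFun, Set.disjoint_left]
    intro x hxp hxp'
    apply hne
    obtain ⟨h1, h2, h3, h4⟩ := hGprop _ p.2
    obtain ⟨h1', h2', h3', h4'⟩ := hGprop _ p'.2
    have e1 := hfl_of_gap _ _ x h1 h2 h4 hxp
    have e2 := hfl_of_gap _ _ x h1' h2' h4' hxp'
    apply Subtype.ext
    apply Prod.ext
    · rw [← e1.1, ← e2.1]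
    · rw [← e1.2, ← e2.2]
  -- the pieces of [a,b] ∖ F
  have hsmeas : ∀ p : ↥G,
      MeasurableSet (Set.Ioo (p : ℝ × ℝ).1 (p : ℝ × ℝ).2 ∩ Set.Ioc a b) :=
    fun p => measurableSet_Ioo.inter measurableSet_Ioc
  have hdisj : Pairwise (Function.onFun Disjoint fun p : ↥G =>
      Set.Ioo (p : ℝ × ℝ).1 (p : ℝ × ℝ).2 ∩ Set.Ioc a b) := by
    intro p p' hne
    exact ((hIooDisj hne).mono Set.inter_subset_left Set.inter_subset_left)
  have hunion : (⋃ p : ↥G, Set.Ioo (p : ℝ × ℝ).1 (p : ℝ × ℝ).2 ∩ Set.Ioc a b)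
      = Set.Ioc a b \ F := by
    ext x
    simp only [Set.mem_iUnion, Set.mem_diff, Set.mem_inter_iff]
    constructor
    · rintro ⟨p, hx1, hx2⟩
      refine ⟨hx2, ?_⟩
      intro hxF
      obtain ⟨-, -, -, h4⟩ := hGprop _ p.2
      have h5 : x ∈ Set.Ioo (p : ℝ × ℝ).1 (p : ℝ × ℝ).2 ∩ F := ⟨hx1, hxF⟩
      rw [h4] at h5; exact h5
    · rintro ⟨hx1, hx2⟩
      obtain ⟨p, hpG, hxp⟩ := hcover x hx2
      exact ⟨⟨p, hpG⟩, hxp, hx1⟩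
  have hvolIoc : volume (Set.Ioc a b) < ⊤ := by
    rw [Real.volume_Ioc]; exact ENNReal.ofReal_lt_top
  have hintIoc : IntegrableOn f (Set.Ioc a b) volume := hIntOn _ hvolIoc
  -- step 1 : restrict to the complement of F
  have hstep1 : (∫ x in a..b, f x) = ∫ x in Set.Ioc a b \ F, f x := by
    rw [intervalIntegral.integral_of_le hab]
    have h1 := integral_inter_add_diff (μ := volume) hF_closed.measurableSet hintIoc
    have h2 : ∫ x in Set.Ioc a b ∩ F, f x ∂volume = 0 := by
      rw [setIntegral_congr_fun (measurableSet_Ioc.inter hF_closed.measurableSet)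
        (fun x hx => hfF x hx.2)]
      simp
    linarith
  have hintU : IntegrableOn f
      (⋃ p : ↥G, Set.Ioo (p : ℝ × ℝ).1 (p : ℝ × ℝ).2 ∩ Set.Ioc a b) volume := by
    apply hintIoc.mono_set
    rw [hunion]; exact Set.diff_subset
  -- step 2 : decompose as a sum over gaps
  have hstep2 : ∫ x in Set.Ioc a b \ F, f x
      = ∑' p : ↥G, ∫ x in Set.Ioo (p : ℝ × ℝ).1 (p : ℝ × ℝ).2 ∩ Set.Ioc a b, f x := by
    rw [← hunion]
    exact integral_iUnion hsmeas hdisj hintU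
  -- the enlarged interval and the length of each gap
  set A : Set ℝ := Set.Icc (a - 2*δ) (b + 2*δ) with hA
  have hAmeas : MeasurableSet A := measurableSet_Icc
  set c : ℝ := δ ^ k / ((k : ℝ) + 1) with hc
  have hkpos : (0:ℝ) < (k : ℝ) + 1 := by positivity
  have hcpos : 0 ≤ c := by positivity
  set v : ↥G → ℝ := fun p =>
    (volume (Set.Ioo (p : ℝ × ℝ).1 (p : ℝ × ℝ).2 ∩ A)).toReal with hv
  have hvnonneg : ∀ p, 0 ≤ v p := fun p => ENNReal.toReal_nonneg
  -- step 3 : per-gap bound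
  have hterm : ∀ p : ↥G,
      ∫ x in Set.Ioo (p : ℝ × ℝ).1 (p : ℝ × ℝ).2 ∩ Set.Ioc a b, f x ≤ c * v p := by
    intro p
    obtain ⟨h1, h2, h3, h4⟩ := hGprop _ p.2
    set z : ℝ := (p : ℝ × ℝ).1 with hz
    set z' : ℝ := (p : ℝ × ℝ).2 with hz'
    rcases Set.eq_empty_or_nonempty (Set.Ioo z z' ∩ Set.Ioc a b) with he | ⟨x, hx⟩
    · rw [he]
      simp only [Measure.restrict_empty, integral_zero_measure]
      exact mul_nonneg hcpos (hvnonneg p)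
    · have hgx := hfl_of_gap z z' x h1 h2 h4 hx.1
      have hglen : z' - z ≤ 2*δ := by
        have h5 := hgap x; rw [hgx.1, hgx.2] at h5; exact h5
      have hsub : Set.Ioo z z' ⊆ A := by
        intro y hy
        constructor
        · have := hx.2.1; have := hx.1.2; have := hy.1; linarith
        · have := hx.2.2; have := hx.1.1; have := hy.2; linarith
      have hvol : v p = z' - z := by
        have h5 : Set.Ioo z z' ∩ A = Set.Ioo z z' := Set.inter_eq_left.2 hsub
        simp only [hv]
        rw [← hz, ← hz', h5, Real.volume_Ioo, ENNReal.toReal_ofReal (by linarith : (0:ℝ) ≤ z' - z)]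
      set m : ℝ := (z + z') / 2 with hm
      have hzm : z ≤ m := by rw [hm]; linarith
      have hmz' : m ≤ z' := by rw [hm]; linarith
      have hmltz' : m < z' := by rw [hm]; linarith
      have hzltm : z < m := by rw [hm]; linarith
      have hintIoo : IntegrableOn f (Set.Ioc z z') volume :=
        hIntOn _ (by rw [Real.volume_Ioc]; exact ENNReal.ofReal_lt_top)
      have hIlow : IntegrableOn f (Set.Ioc z m) volume :=
        hintIoo.mono_set (Set.Ioc_subset_Ioc_right hmz')
      have hIhigh : IntegrableOn f (Set.Ioc m z') volume :=
        hintIoo.mono_set (Set.Ioc_subset_Ioc_left hzm)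
      have hstepA : ∫ x in Set.Ioo z z' ∩ Set.Ioc a b, f x ≤ ∫ x in Set.Ioc z z', f x := by
        apply setIntegral_mono_set hintIoo
        · filter_upwards with y using hfnonneg y
        · exact (Set.inter_subset_left.trans Set.Ioo_subset_Ioc_self).eventuallyLE
      have hEq : ∫ x in Set.Ioc z z', f x
          = (∫ x in Set.Ioc z m, f x) + ∫ x in Set.Ioc m z', f x := by
        rw [← Set.Ioc_union_Ioc_eq_Ioc hzm hmz']
        exact setIntegral_union (Set.Ioc_disjoint_Ioc_of_le le_rfl) measurableSet_Ioc hIlow hIhigh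
      have hlow : ∫ x in Set.Ioc z m, f x ≤ ∫ x in Set.Ioc z m, (x - z) ^ k := by
        apply setIntegral_mono_on hIlow
          (((continuous_id.sub continuous_const).pow k).integrableOn_Ioc) measurableSet_Ioc
        intro x hx'
        have hxIoo : x ∈ Set.Ioo z z' := ⟨hx'.1, lt_of_le_of_lt hx'.2 hmltz'⟩
        have hfx := hfl_of_gap z z' x h1 h2 h4 hxIoo
        have h5 : f x = (min (x - z) (z' - x)) ^ k := by
          simp only [hf]; rw [hrd_near x, hfx.1, hfx.2]
        rw [h5]
        have hmin0 : 0 ≤ min (x - z) (z' - x) :=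
          le_min (by linarith [hxIoo.1]) (by linarith [hxIoo.2])
        exact pow_le_pow_left₀ hmin0 (min_le_left _ _) k
      have hhigh : ∫ x in Set.Ioc m z', f x ≤ ∫ x in Set.Ioc m z', (z' - x) ^ k := by
        apply setIntegral_mono_on hIhigh
          (((continuous_const.sub continuous_id).pow k).integrableOn_Ioc) measurableSet_Ioc
        intro x hx'
        rcases eq_or_lt_of_le hx'.2 with heq | hlt'
        · rw [heq, hfF z' h2]
          simp only [Pi.pow_apply, Pi.sub_apply, id_eq, ← hz', sub_self]
          exact pow_nonneg le_rfl k
        · have hxIoo : x ∈ Set.Ioo z z' := ⟨lt_trans hzltm hx'.1, hlt'⟩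
          have hfx := hfl_of_gap z z' x h1 h2 h4 hxIoo
          have h5 : f x = (min (x - z) (z' - x)) ^ k := by
            simp only [hf]; rw [hrd_near x, hfx.1, hfx.2]
          rw [h5]
          have hmin0 : 0 ≤ min (x - z) (z' - x) :=
            le_min (by linarith [hxIoo.1]) (by linarith [hxIoo.2])
          exact pow_le_pow_left₀ hmin0 (min_le_right _ _) k
      have hlowval : ∫ x in Set.Ioc z m, (x - z) ^ k = (m - z) ^ (k+1) / ((k : ℝ) + 1) := by
        rw [← intervalIntegral.integral_of_le hzm,
          intervalIntegral.integral_comp_sub_right (fun x => x ^ k) z, integral_pow]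
        rw [sub_self, zero_pow (by omega : k + 1 ≠ 0), sub_zero]
      have hhighval : ∫ x in Set.Ioc m z', (z' - x) ^ k = (z' - m) ^ (k+1) / ((k : ℝ) + 1) := by
        rw [← intervalIntegral.integral_of_le hmz',
          intervalIntegral.integral_comp_sub_left (fun x => x ^ k) z', integral_pow]
        rw [sub_self, zero_pow (by omega : k + 1 ≠ 0), sub_zero]
      have e1 : m - z = (z' - z) / 2 := by rw [hm]; ring
      have e2 : z' - m = (z' - z) / 2 := by rw [hm]; ring
      have hh0 : 0 ≤ (z' - z) / 2 := by linarith
      have hhδ : (z' - z) / 2 ≤ δ := by linarith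
      have hpk : ((z' - z) / 2) ^ k ≤ δ ^ k := pow_le_pow_left₀ hh0 hhδ k
      have key : ((z' - z) / 2) ^ (k+1) + ((z' - z) / 2) ^ (k+1) ≤ δ ^ k * (z' - z) := by
        have h6 : ((z' - z) / 2) ^ k * ((z' - z) / 2) ≤ δ ^ k * ((z' - z) / 2) :=
          mul_le_mul_of_nonneg_right hpk hh0
        rw [pow_succ]
        nlinarith [h6]
      calc ∫ x in Set.Ioo z z' ∩ Set.Ioc a b, f x
          ≤ ∫ x in Set.Ioc z z', f x := hstepA
        _ = (∫ x in Set.Ioc z m, f x) + ∫ x in Set.Ioc m z', f x := hEq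
        _ ≤ (m - z) ^ (k+1) / ((k : ℝ) + 1) + (z' - m) ^ (k+1) / ((k : ℝ) + 1) := by
            rw [← hlowval, ← hhighval]; exact add_le_add hlow hhigh
        _ ≤ c * (z' - z) := by
            rw [e1, e2, hc, ← add_div, div_mul_eq_mul_div]
            exact (div_le_div_iff_of_pos_right hkpos).2 key
        _ = c * v p := by rw [hvol]
  -- step 4 : summing up
  have htmeas : ∀ p : ↥G, MeasurableSet (Set.Ioo (p : ℝ × ℝ).1 (p : ℝ × ℝ).2 ∩ A) :=
    fun p => measurableSet_Ioo.inter hAmeas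
  have htdisj : Pairwise (Function.onFun Disjoint fun p : ↥G =>
      Set.Ioo (p : ℝ × ℝ).1 (p : ℝ × ℝ).2 ∩ A) := by
    intro p p' hne
    exact ((hIooDisj hne).mono Set.inter_subset_left Set.inter_subset_left)
  have hvolA : volume A = ENNReal.ofReal ((b + 2*δ) - (a - 2*δ)) := by
    rw [hA, Real.volume_Icc]
  have hsum_bound : ∀ E : Finset ↥G, ∑ p ∈ E, v p ≤ (b - a) + 4*δ := by
    intro E
    have h1 : ∀ p ∈ E, volume (Set.Ioo (p : ℝ × ℝ).1 (p : ℝ × ℝ).2 ∩ A) ≠ ⊤ := by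
      intro p _
      exact (lt_of_le_of_lt (measure_mono Set.inter_subset_right)
        (by rw [hvolA]; exact ENNReal.ofReal_lt_top)).ne
    have h2 : ∑ p ∈ E, v p
        = (∑ p ∈ E, volume (Set.Ioo (p : ℝ × ℝ).1 (p : ℝ × ℝ).2 ∩ A)).toReal := by
      rw [ENNReal.toReal_sum h1]
    rw [h2, ← measure_biUnion_finset (fun p _ q _ hne => htdisj hne) (fun p _ => htmeas p)]
    have h3 : (⋃ p ∈ E, Set.Ioo (p : ℝ × ℝ).1 (p : ℝ × ℝ).2 ∩ A) ⊆ A :=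
      Set.iUnion₂_subset fun p _ => Set.inter_subset_right
    calc (volume (⋃ p ∈ E, Set.Ioo (p : ℝ × ℝ).1 (p : ℝ × ℝ).2 ∩ A)).toReal
        ≤ (volume A).toReal :=
          ENNReal.toReal_mono (by rw [hvolA]; exact ENNReal.ofReal_ne_top) (measure_mono h3)
      _ ≤ (b - a) + 4*δ := by
          rw [hvolA, ENNReal.toReal_ofReal (by linarith)]; linarith
  have hvsum : Summable v := summable_of_sum_le (fun p => hvnonneg p) hsum_bound
  have hssum : Summable (fun p : ↥G =>
      ∫ x in Set.Ioo (p : ℝ × ℝ).1 (p : ℝ × ℝ).2 ∩ Set.Ioc a b, f x) :=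
    Summable.of_nonneg_of_le
      (fun p => setIntegral_nonneg (hsmeas p) (fun x _ => hfnonneg x))
      hterm (hvsum.mul_left c)
  have htsle : (∑' p : ↥G, ∫ x in Set.Ioo (p : ℝ × ℝ).1 (p : ℝ × ℝ).2 ∩ Set.Ioc a b, f x)
      ≤ c * ((b - a) + 4*δ) := by
    calc (∑' p : ↥G, ∫ x in Set.Ioo (p : ℝ × ℝ).1 (p : ℝ × ℝ).2 ∩ Set.Ioc a b, f x)
        ≤ ∑' p : ↥G, c * v p := Summable.tsum_le_tsum hterm hssum (hvsum.mul_left c)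
      _ = c * ∑' p : ↥G, v p := tsum_mul_left
      _ ≤ c * ((b - a) + 4*δ) :=
          mul_le_mul_of_nonneg_left (Summable.tsum_le_of_sum_le hvsum hsum_bound) hcpos
  -- conclusion
  have hmain : (∫ x in a..b, f x) ≤ c * ((b - a) + 4*δ) := by
    rw [hstep1, hstep2]; exact htsle
  have hfinal : c * ((b - a) + 4*δ)
      = ((b - a) / ((k : ℝ) + 1)) * δ ^ k + (4 / ((k : ℝ) + 1)) * δ ^ (k + 1) := by
    rw [hc, pow_succ]
    field_simp
  calc (∫ x in a..b, f x) ≤ c * ((b - a) + 4*δ) := hmain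
    _ = _ := hfinal
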